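/- (Theorem 2) A rationalizing distribution ν for a system of choice probabilities (X,P) is the unique rationalizing distribution if and only if there is no pair of linear orders π, π' with ν(π) > 0 and ν(π') > 0 for which there exist x, y, z ∈ X with x ≠ y satisfying: both π and π' rank x and y above z; the weak upper contour sets of z differ, U_π(z) ≠ U_{π'}(z); and U_π(x) = U_{π'}(y). -/
import Mathlib


open Finset
open scoped Classical

/-- A linear order on a finite set `α`, encoded as a ranking bijection to `Fin (card α)`;
higher value means more preferred. -/
abbrev RankOrd (α : Type*) [Fintype α] := α ≃ Fin (Fintype.card α)

variable {α : Type*} [Fintype α] [DecidableEq α]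

/-- `ν` is a probability distribution over linear orders. -/
def IsDist [Fintype α] (ν : RankOrd α → ℝ) : Prop :=
  (∀ π, 0 ≤ ν π) ∧ ∑ π : RankOrd α, ν π = 1

/-- The choice probabilities induced by a distribution over linear orders. -/
noncomputable def choiceProb (ν : RankOrd α → ℝ) (A : Finset α) (x : α) : ℝ :=
  ∑ π : RankOrd α, if ∀ y ∈ A, y ≠ x → (π y : ℕ) < (π x : ℕ) then ν π else 0

/-- `ν` rationalizes the system of choice probabilities `P`. -/
def Rationalizes (ν : RankOrd α → ℝ) (P : Finset α → α → ℝ) : Prop :=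
  IsDist ν ∧ ∀ A : Finset α, A.Nonempty → ∀ x ∈ A, P A x = choiceProb ν A x

/-- The Block–Marschak polynomial `q(x,A)` of a system of choice probabilities `P`. -/
noncomputable def bm (P : Finset α → α → ℝ) (x : α) (A : Finset α) : ℝ :=
  ∑ A' ∈ Finset.univ.powerset.filter (fun A' => A ⊆ A'),
    (-1 : ℝ) ^ (A' \ A).card * P A' x

/-- A path: a maximal chain `X = A_0 ⊋ A_1 ⊋ ⋯ ⊋ A_{|X|} = ∅` decreasing by one element. -/
def IsPath (ρ : ℕ → Finset α) : Prop :=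
  ρ 0 = Finset.univ ∧ ρ (Fintype.card α) = ∅ ∧
    ∀ i < Fintype.card α, ρ (i + 1) ⊆ ρ i ∧ (ρ i \ ρ (i + 1)).card = 1

/-- A supported path: all Block–Marschak edge weights along it are strictly positive. -/
def SupportedPath (P : Finset α → α → ℝ) (ρ : ℕ → Finset α) : Prop :=
  IsPath ρ ∧ ∀ i < Fintype.card α, ∀ x ∈ ρ i \ ρ (i + 1), 0 < bm P x (ρ i)

/-- Two paths are branching: they agree on a consecutive block of nodes
`{i,…,j} ⊆ {1,…,|X|-1}` while differing at positions `i-1` and `j+1`. -/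
def BranchingPair (ρ ρ' : ℕ → Finset α) : Prop :=
  ∃ i j, 1 ≤ i ∧ i ≤ j ∧ j ≤ Fintype.card α - 1 ∧
    ρ (i - 1) ≠ ρ' (i - 1) ∧ ρ (j + 1) ≠ ρ' (j + 1) ∧
    ∀ m, i ≤ m → m ≤ j → ρ m = ρ' m

/-- The path associated with the linear order `π`: `A_i` is `X` minus the top `i` elements. -/
def pathOf (π : RankOrd α) : ℕ → Finset α :=
  fun i => Finset.univ.filter (fun w => (π w : ℕ) < Fintype.card α - i)

/-- The weak upper contour set of `x` according to `π`. -/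
def upper (π : RankOrd α) (x : α) : Finset α :=
  Finset.univ.filter (fun w => (π x : ℕ) ≤ (π w : ℕ))

/-- `π ∈ M_{x,A}`: `π` ranks `X \ A` above `x` and `x` above `A \ {x}`. -/
def inM (π : RankOrd α) (x : α) (A : Finset α) : Prop :=
  (∀ z, z ∉ A → (π x : ℕ) < (π z : ℕ)) ∧ ∀ y ∈ A, y ≠ x → (π y : ℕ) < (π x : ℕ)

-- chunk 1: basic rank lemmas
lemma card_valGe (n m : ℕ) : ((Finset.univ : Finset (Fin n)).filter (fun j : Fin n => m ≤ (j:ℕ))).card = n - m := by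
  by_cases h : m < n
  · have : (Finset.univ : Finset (Fin n)).filter (fun j : Fin n => m ≤ (j:ℕ)) = Finset.Ici (⟨m, h⟩ : Fin n) := by
      ext j
      rw [Finset.mem_filter, Finset.mem_Ici]
      simp only [Finset.mem_univ, true_and]
      exact Iff.rfl
    rw [this, Fin.card_Ici]
  · have : (Finset.univ : Finset (Fin n)).filter (fun j : Fin n => m ≤ (j:ℕ)) = ∅ := by
      ext j
      simp only [Finset.mem_filter, Finset.mem_univ, true_and, Finset.notMem_empty, iff_false]
      intro hm
      exact absurd (lt_of_le_of_lt hm j.isLt) h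
    rw [this]
    simp
    omega

lemma card_rankGe (π : RankOrd α) (m : ℕ) :
    (Finset.univ.filter (fun w => m ≤ (π w : ℕ))).card = Fintype.card α - m := by
  have himg : (Finset.univ.filter (fun w => m ≤ (π w : ℕ))).image π
      = (Finset.univ : Finset (Fin (Fintype.card α))).filter (fun j : Fin (Fintype.card α) => m ≤ (j:ℕ)) := by
    ext j
    simp only [Finset.mem_image, Finset.mem_filter, Finset.mem_univ, true_and]
    constructor
    · rintro ⟨w, hw, rfl⟩; exact hw
    · intro hj; exact ⟨π.symm j, by simpa using hj, by simp⟩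
  rw [← card_valGe (Fintype.card α) m, ← himg,
    Finset.card_image_of_injective _ π.injective]

omit [DecidableEq α] in
lemma mem_upper {π : RankOrd α} {x w : α} : w ∈ upper π x ↔ (π x : ℕ) ≤ (π w : ℕ) := by
  simp [upper]

lemma card_upper (π : RankOrd α) (x : α) :
    (upper π x).card = Fintype.card α - (π x : ℕ) := card_rankGe π _

lemma rank_eq_of_upper_eq {π π' : RankOrd α} {z : α} (h : upper π z = upper π' z) :
    (π z : ℕ) = (π' z : ℕ) := by
  have h1 := card_upper π z
  have h2 := card_upper π' z
  rw [h, h2] at h1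
  have e1 : (π z : ℕ) < Fintype.card α := (π z).isLt
  have e2 : (π' z : ℕ) < Fintype.card α := (π' z).isLt
  omega

set_option linter.unusedSectionVars false

-- chunk 2: both rationalizing distributions have the same contour marginals
lemma cum_eq {ν : RankOrd α → ℝ} {P : Finset α → α → ℝ} (hν : Rationalizes ν P)
    (x : α) (C : Finset α) (hx : x ∈ C) :
    (∑ π : RankOrd α, if upper π x ⊆ C then ν π else 0) = P (Cᶜ ∪ {x}) x := by
  rw [hν.2 (Cᶜ ∪ {x}) ⟨x, by simp⟩ x (by simp)]
  unfold choiceProb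
  apply Finset.sum_congr rfl
  intro π _
  congr 1
  apply propext
  constructor
  · intro h y hy hyx
    have hyC : y ∉ C := by
      rcases Finset.mem_union.1 hy with h1 | h1
      · exact Finset.mem_compl.1 h1
      · exact absurd (Finset.mem_singleton.1 h1) hyx
    have : y ∉ upper π x := fun hmem => hyC (h hmem)
    rw [mem_upper] at this
    omega
  · intro h w hw
    rcases eq_or_ne w x with rfl | hne
    · exact hx
    · by_contra hwC
      have hwA : w ∈ Cᶜ ∪ {x} := by simp [hwC]
      have := h w hwA hne
      rw [mem_upper] at hw
      omega

lemma marg_eq {ν ν' : RankOrd α → ℝ} {P : Finset α → α → ℝ}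
    (hν : Rationalizes ν P) (hν' : Rationalizes ν' P) (x : α) (B : Finset α) :
    (∑ π : RankOrd α, if upper π x = B then ν π else 0)
      = (∑ π : RankOrd α, if upper π x = B then ν' π else 0) := by
  -- cumulative sums agree
  have hcum : ∀ C : Finset α, x ∈ C →
      (∑ π : RankOrd α, if upper π x ⊆ C then ν π else 0)
        = (∑ π : RankOrd α, if upper π x ⊆ C then ν' π else 0) := by
    intro C hx
    rw [cum_eq hν x C hx, cum_eq hν' x C hx]
  -- if x ∉ B, both sides vanish
  by_cases hxB : x ∈ B
  swap
  · have hz : ∀ (μ : RankOrd α → ℝ), (∑ π : RankOrd α, if upper π x = B then μ π else 0) = 0 := by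
      intro μ
      apply Finset.sum_eq_zero
      intro π _
      rw [if_neg]
      intro h
      exact hxB (h ▸ mem_upper.2 le_rfl)
    rw [hz ν, hz ν']
  -- strong induction on B
  clear hxB
  induction B using Finset.strongInduction with
  | _ B ih =>
    by_cases hxB : x ∈ B
    swap
    · have hz : ∀ (μ : RankOrd α → ℝ), (∑ π : RankOrd α, if upper π x = B then μ π else 0) = 0 := by
        intro μ
        apply Finset.sum_eq_zero
        intro π _
        rw [if_neg]
        intro h
        exact hxB (h ▸ mem_upper.2 le_rfl)
      rw [hz ν, hz ν']
    · -- cumulative = sum over powerset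
      have hsplit : ∀ (μ : RankOrd α → ℝ),
          (∑ π : RankOrd α, if upper π x ⊆ B then μ π else 0)
            = ∑ D ∈ B.powerset, (∑ π : RankOrd α, if upper π x = D then μ π else 0) := by
        intro μ
        rw [Finset.sum_comm]
        apply Finset.sum_congr rfl
        intro π _
        rw [Finset.sum_ite_eq B.powerset (upper π x) (fun _ => μ π)]
        simp [Finset.mem_powerset]
      have h1 := hcum B hxB
      rw [hsplit ν, hsplit ν'] at h1
      rw [← Finset.add_sum_erase _ _ (Finset.mem_powerset_self B),
          ← Finset.add_sum_erase _ _ (Finset.mem_powerset_self B)] at h1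
      have h2 : ∑ D ∈ B.powerset.erase B, (∑ π : RankOrd α, if upper π x = D then ν π else 0)
          = ∑ D ∈ B.powerset.erase B, (∑ π : RankOrd α, if upper π x = D then ν' π else 0) := by
        apply Finset.sum_congr rfl
        intro D hD
        rcases Finset.mem_erase.1 hD with ⟨hne, hD⟩
        exact ih D (Finset.ssubset_iff_subset_ne.2 ⟨Finset.mem_powerset.1 hD, hne⟩)
      linarith

-- chunk 3: top sets and agreement on top segments
def topset (π : RankOrd α) (k : ℕ) : Finset α :=
  Finset.univ.filter (fun w => Fintype.card α - k ≤ (π w : ℕ))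

def topAgree (π π' : RankOrd α) (k : ℕ) : Prop :=
  ∀ w, Fintype.card α - k ≤ (π w : ℕ) → (π w : ℕ) = (π' w : ℕ)

omit [DecidableEq α] in
lemma mem_topset {π : RankOrd α} {k : ℕ} {w : α} :
    w ∈ topset π k ↔ Fintype.card α - k ≤ (π w : ℕ) := by simp [topset]

lemma card_topset (π : RankOrd α) (k : ℕ) :
    (topset π k).card = Fintype.card α - (Fintype.card α - k) := card_rankGe π _

omit [DecidableEq α] in
lemma topset_mono {π : RankOrd α} {l k : ℕ} (h : l ≤ k) : topset π l ⊆ topset π k := by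
  intro w hw
  rw [mem_topset] at hw ⊢
  omega

lemma topset_eq_of_topAgree {π π' : RankOrd α} {k : ℕ} (h : topAgree π π' k) :
    topset π k = topset π' k := by
  apply Finset.eq_of_subset_of_card_le
  · intro w hw
    rw [mem_topset] at hw ⊢
    rw [← h w hw]
    exact hw
  · rw [card_topset, card_topset]

lemma topAgree_symm {π π' : RankOrd α} {k : ℕ} (h : topAgree π π' k) : topAgree π' π k := by
  intro w hw
  have hw' : w ∈ topset π k := by
    rw [topset_eq_of_topAgree h, mem_topset]; exact hw
  rw [mem_topset] at hw'
  exact (h w hw').symm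

lemma topAgree_trans {π₁ π₂ π₃ : RankOrd α} {k : ℕ}
    (h1 : topAgree π₁ π₂ k) (h2 : topAgree π₂ π₃ k) : topAgree π₁ π₃ k := by
  intro w hw
  rw [h1 w hw]
  exact h2 w (by rw [← h1 w hw]; exact hw)

omit [DecidableEq α] in
lemma topAgree_mono {π π' : RankOrd α} {l k : ℕ} (h : l ≤ k) (ha : topAgree π π' k) :
    topAgree π π' l := fun w hw => ha w (by omega)

omit [DecidableEq α] in
lemma topAgree_zero (π π' : RankOrd α) : topAgree π π' 0 := by
  intro w hw
  have := (π w).isLt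
  omega

omit [DecidableEq α] in
lemma eq_of_topAgree_card {π π' : RankOrd α} (h : topAgree π π' (Fintype.card α)) : π = π' := by
  apply Equiv.ext
  intro w
  exact Fin.ext (h w (by omega))

omit [DecidableEq α] in
lemma topAgree_succ_iff {π π' : RankOrd α} {k : ℕ} (hk : k < Fintype.card α)
    {x : α} (hx : (π x : ℕ) = Fintype.card α - k - 1) :
    topAgree π π' (k + 1) ↔ topAgree π π' k ∧ (π' x : ℕ) = Fintype.card α - k - 1 := by
  constructor
  · intro h
    refine ⟨topAgree_mono (by omega) h, ?_⟩
    rw [← h x (by omega)]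
    exact hx
  · rintro ⟨h1, h2⟩ w hw
    by_cases hcase : Fintype.card α - k ≤ (π w : ℕ)
    · exact h1 w hcase
    · have hww : (π w : ℕ) = Fintype.card α - k - 1 := by omega
      have : w = x := π.injective (Fin.ext (by rw [hww, hx]))
      rw [this, hx, h2]

omit [DecidableEq α] in
lemma upper_eq_topset {π : RankOrd α} {a : α} {l : ℕ}
    (ha : (π a : ℕ) = Fintype.card α - l) : upper π a = topset π l := by
  ext w
  rw [mem_upper, mem_topset, ha]

lemma topset_succ_eq {π : RankOrd α} {k : ℕ} (hk : k < Fintype.card α)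
    {x : α} (hx : (π x : ℕ) = Fintype.card α - k - 1) :
    topset π (k + 1) = topset π k ∪ {x} := by
  ext w
  rw [mem_topset, Finset.mem_union, mem_topset, Finset.mem_singleton]
  constructor
  · intro h
    by_cases hcase : Fintype.card α - k ≤ (π w : ℕ)
    · exact Or.inl hcase
    · have hww : (π w : ℕ) = Fintype.card α - k - 1 := by omega
      exact Or.inr (π.injective (Fin.ext (by rw [hww, hx])))
  · rintro (h | rfl)
    · omega
    · omega

lemma topAgree_of_topsets {π π' : RankOrd α} {k : ℕ}
    (h : ∀ l ≤ k, topset π l = topset π' l) : topAgree π π' k := by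
  intro w hw
  have hlt : (π w : ℕ) < Fintype.card α := (π w).isLt
  set l := Fintype.card α - (π w : ℕ) with hl
  have hlk : l ≤ k := by omega
  have h1 : w ∈ topset π' l := by
    rw [← h l hlk, mem_topset]; omega
  have h2 : w ∉ topset π' (l - 1) := by
    rw [← h (l - 1) (by omega), mem_topset]; omega
  rw [mem_topset] at h1 h2
  omega

-- chunk 4: no contour pair consequences
def NoCP (ν : RankOrd α → ℝ) : Prop :=
  ¬ ∃ (π π' : RankOrd α) (x y z : α),
      0 < ν π ∧ 0 < ν π' ∧ x ≠ y ∧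
      (π z : ℕ) < (π x : ℕ) ∧ (π z : ℕ) < (π y : ℕ) ∧
      (π' z : ℕ) < (π' x : ℕ) ∧ (π' z : ℕ) < (π' y : ℕ) ∧
      upper π z ≠ upper π' z ∧ upper π x = upper π' y

lemma agree_below_of_merge {ν : RankOrd α → ℝ} (hcp : NoCP ν)
    {τ₁ τ₂ : RankOrd α} {a b : α} {B : Finset α}
    (h1 : 0 < ν τ₁) (h2 : 0 < ν τ₂) (hab : a ≠ b)
    (hA : upper τ₁ a = B) (hB : upper τ₂ b = B) :
    ∀ z ∉ B, (τ₁ z : ℕ) = (τ₂ z : ℕ) := by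
  intro z hz
  have haB : a ∈ B := hA ▸ mem_upper.2 le_rfl
  have hbB : b ∈ B := hB ▸ mem_upper.2 le_rfl
  have hza : (τ₁ z : ℕ) < (τ₁ a : ℕ) := by
    have : z ∉ upper τ₁ a := hA ▸ hz
    rw [mem_upper] at this; omega
  have hzb2 : (τ₂ z : ℕ) < (τ₂ b : ℕ) := by
    have : z ∉ upper τ₂ b := hB ▸ hz
    rw [mem_upper] at this; omega
  have hzb : (τ₁ z : ℕ) < (τ₁ b : ℕ) := by
    have : b ∈ upper τ₁ a := hA ▸ hbB
    rw [mem_upper] at this; omega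
  have hza2 : (τ₂ z : ℕ) < (τ₂ a : ℕ) := by
    have : a ∈ upper τ₂ b := hB ▸ haB
    rw [mem_upper] at this; omega
  have hupp : upper τ₁ z = upper τ₂ z := by
    by_contra hne
    exact hcp ⟨τ₁, τ₂, a, b, z, h1, h2, hab, hza, hzb, hza2, hzb2, hne, hA.trans hB.symm⟩
  exact rank_eq_of_upper_eq hupp

lemma topset_pred {σ : RankOrd α} {l : ℕ} (hl : 1 ≤ l) (hlN : l ≤ Fintype.card α)
    {a : α} (ha : (σ a : ℕ) = Fintype.card α - l) :
    topset σ (l - 1) = (topset σ l).erase a := by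
  ext w
  rw [mem_topset, Finset.mem_erase, mem_topset]
  constructor
  · intro h
    have hne : (σ w : ℕ) ≠ Fintype.card α - l := by omega
    exact ⟨fun he => hne (by rw [he, ha]), by omega⟩
  · rintro ⟨hne, h⟩
    have : (σ w : ℕ) ≠ Fintype.card α - l := fun he =>
      hne (σ.injective (Fin.ext (by rw [he, ha])))
    omega

lemma splitmerge {ν : RankOrd α → ℝ} (hcp : NoCP ν)
    {σ₁ σ₂ : RankOrd α} (h1 : 0 < ν σ₁) (h2 : 0 < ν σ₂) {k : ℕ}
    (htop : topset σ₁ k = topset σ₂ k)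
    (hdiff : ∃ l ≤ k, topset σ₁ l ≠ topset σ₂ l) :
    ∀ z ∉ topset σ₁ k, (σ₁ z : ℕ) = (σ₂ z : ℕ) := by
  obtain ⟨l₁, hl₁k, hl₁⟩ := hdiff
  have hl₁k' : l₁ < k := lt_of_le_of_ne hl₁k (fun he => hl₁ (he ▸ htop))
  have hQ : ∃ m, l₁ < m ∧ topset σ₁ m = topset σ₂ m := ⟨k, hl₁k', htop⟩
  set l := Nat.find hQ with hldef
  obtain ⟨hl₁l, heq⟩ := Nat.find_spec hQ
  have hlk : l ≤ k := Nat.find_min' hQ ⟨hl₁k', htop⟩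
  have hprev : topset σ₁ (l - 1) ≠ topset σ₂ (l - 1) := by
    rcases eq_or_lt_of_le (Nat.succ_le_of_lt hl₁l) with h | h
    · have : l - 1 = l₁ := by omega
      rw [this]; exact hl₁
    · have := Nat.find_min hQ (show l - 1 < l by omega)
      push_neg at this
      exact this (by omega)
  have hl1 : 1 ≤ l := by omega
  have hlN : l ≤ Fintype.card α := by
    by_contra hcon
    apply hprev
    have hall : ∀ (σ : RankOrd α), topset σ (l-1) = Finset.univ := by
      intro σ
      ext w
      simp only [mem_topset, Finset.mem_univ, iff_true]
      omega
    rw [hall σ₁, hall σ₂]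
  have hNl : Fintype.card α - l < Fintype.card α := by omega
  set a := σ₁.symm ⟨Fintype.card α - l, hNl⟩ with hadef
  set b := σ₂.symm ⟨Fintype.card α - l, hNl⟩ with hbdef
  have ha : (σ₁ a : ℕ) = Fintype.card α - l := by rw [hadef]; simp
  have hb : (σ₂ b : ℕ) = Fintype.card α - l := by rw [hbdef]; simp
  have hab : a ≠ b := by
    intro he
    apply hprev
    rw [topset_pred hl1 hlN ha, topset_pred hl1 hlN hb, heq, he]
  have hmerge := agree_below_of_merge hcp h1 h2 hab (upper_eq_topset ha)
    ((upper_eq_topset hb).trans heq.symm)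
  intro z hz
  exact hmerge z (fun hzl => hz (topset_mono hlk hzl))

-- chunk 5: engine lemma
lemma not_topAgree_exists {π π' : RankOrd α} {k : ℕ} (h : ¬ topAgree π π' k) :
    ∃ l ≤ k, topset π l ≠ topset π' l := by
  by_contra hcon
  push_neg at hcon
  exact h (topAgree_of_topsets hcon)

lemma engine {ν ν' : RankOrd α → ℝ} (hcp : NoCP ν) (hd : IsDist ν) (hd' : IsDist ν')
    (hmarg : ∀ (x : α) (B : Finset α),
      (∑ π : RankOrd α, if upper π x = B then ν π else 0)
        = (∑ π : RankOrd α, if upper π x = B then ν' π else 0))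
    {k : ℕ} (hkN : k ≤ Fintype.card α) {S : Finset α}
    {ρ₁ ρ₂ : RankOrd α} (hρ₁ : 0 < ν ρ₁) (hρ₂ : 0 < ν ρ₂)
    (hS₁ : topset ρ₁ k = S) (hS₂ : topset ρ₂ k = S)
    {z₀ : α} (hz₀ : z₀ ∉ S) (hzne : (ρ₁ z₀ : ℕ) ≠ (ρ₂ z₀ : ℕ)) :
    (∀ σ, 0 < ν σ → topset σ k = S → topAgree ρ₁ σ k) ∧
    (∀ τ, 0 < ν' τ → topset τ k = S → topAgree ρ₁ τ k) := by
  -- ρ₁ and ρ₂ agree on S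
  have agree12 : topAgree ρ₁ ρ₂ k := by
    by_contra h
    obtain ⟨l, hlk, hl⟩ := not_topAgree_exists h
    have := splitmerge hcp hρ₁ hρ₂ (hS₁.trans hS₂.symm) ⟨l, hlk, hl⟩ z₀ (hS₁ ▸ hz₀)
    exact hzne this
  have hnu : ∀ σ, 0 < ν σ → topset σ k = S → topAgree ρ₁ σ k := by
    intro σ hσ hSσ
    by_contra hnag
    have e₁ := splitmerge hcp hρ₁ hσ (hS₁.trans hSσ.symm) (not_topAgree_exists hnag)
      z₀ (hS₁ ▸ hz₀)
    have hnag2 : ¬ topAgree ρ₂ σ k := by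
      intro h
      exact hnag (topAgree_trans agree12 h)
    have e₂ := splitmerge hcp hρ₂ hσ (hS₂.trans hSσ.symm) (not_topAgree_exists hnag2)
      z₀ (hS₂ ▸ hz₀)
    exact hzne (e₁.trans e₂.symm)
  refine ⟨hnu, ?_⟩
  intro τ hτ hSτ
  -- downward induction on levels
  have D : ∀ i ≤ k, topset τ (k - i) = topset ρ₁ (k - i) := by
    intro i
    induction i with
    | zero => intro _; simpa using hSτ.trans hS₁.symm
    | succ m ihm =>
      intro hm
      have ihB := ihm (by omega)
      set l := k - m with hldef
      have hl1 : 1 ≤ l := by omega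
      have hlk : l ≤ k := by omega
      have hlN : l ≤ Fintype.card α := le_trans hlk hkN
      have hNl : Fintype.card α - l < Fintype.card α := by omega
      have hkm : k - (m + 1) = l - 1 := by omega
      rw [hkm]
      set B := topset ρ₁ l with hBdef
      have hBτ : topset τ l = B := ihB
      set a := ρ₁.symm ⟨Fintype.card α - l, hNl⟩ with hadef
      set b := τ.symm ⟨Fintype.card α - l, hNl⟩ with hbdef
      have ha : (ρ₁ a : ℕ) = Fintype.card α - l := by rw [hadef]; simp
      have hb : (τ b : ℕ) = Fintype.card α - l := by rw [hbdef]; simp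
      by_cases hab : a = b
      · rw [topset_pred hl1 hlN hb, topset_pred hl1 hlN ha, hBτ, hab]
      · exfalso
        -- τ uses edge (B.erase b → B); so ν-flow on it is positive
        have hupτ : upper τ b = B := (upper_eq_topset hb).trans hBτ
        have hpos : (0:ℝ) < ∑ π : RankOrd α, if upper π b = B then ν π else 0 := by
          rw [hmarg b B]
          have h0 : ∀ π : RankOrd α, π ∈ Finset.univ →
              (0:ℝ) ≤ if upper π b = B then ν' π else 0 := by
            intro π _
            by_cases h : upper π b = B
            · rw [if_pos h]; exact hd'.1 π
            · rw [if_neg h]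
          have hle := Finset.single_le_sum h0 (Finset.mem_univ τ)
          rw [if_pos hupτ] at hle
          linarith
        obtain ⟨σ, _, hσne⟩ := Finset.exists_ne_zero_of_sum_ne_zero (ne_of_gt hpos)
        have hupσ : upper σ b = B := by
          by_contra h
          rw [if_neg h] at hσne
          exact hσne rfl
        rw [if_pos hupσ] at hσne
        have hσpos : 0 < ν σ := lt_of_le_of_ne (hd.1 σ) (Ne.symm hσne)
        have hσb : (σ b : ℕ) = Fintype.card α - l := by
          have hcard : (upper σ b).card = B.card := by rw [hupσ]
          rw [card_upper] at hcard
          have hBcard : B.card = Fintype.card α - (Fintype.card α - l) := card_topset ρ₁ l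
          have := (σ b).isLt
          omega
        -- σ merges with ρ₁ at B via different entries b ≠ a
        have hbelow := agree_below_of_merge hcp hσpos hρ₁ (Ne.symm hab)
          hupσ (upper_eq_topset ha)
        -- hence σ passes S as well
        have hSσ : topset σ k = S := by
          rw [← hS₁]
          ext w
          by_cases hwB : w ∈ B
          · have h1 : w ∈ topset ρ₁ k := topset_mono hlk hwB
            have h2 : w ∈ topset σ k := by
              rw [← hupσ] at hwB
              rw [mem_upper] at hwB
              rw [mem_topset]
              omega
            simp only [h1, h2]
          · rw [mem_topset, mem_topset, hbelow w hwB]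
        -- so σ agrees with ρ₁ on S, but its entry at level l is b ≠ a
        have hag := hnu σ hσpos hSσ
        have haS : Fintype.card α - k ≤ (ρ₁ a : ℕ) := by omega
        have hσa : (σ a : ℕ) = Fintype.card α - l := by rw [← hag a haS, ha]
        exact hab (σ.injective (Fin.ext (by rw [hσa, hσb])))
  apply topAgree_of_topsets
  intro l hlk
  have := D (k - l) (by omega)
  rw [show k - (k - l) = l by omega] at this
  exact this.symm

-- chunk 6: main induction
lemma union_singleton_eq {s : Finset α} {a : α} : s ∪ {a} = insert a s := by
  ext w; simp [or_comm]
lemma sum_if_congr {μ : RankOrd α → ℝ} {p q : RankOrd α → Prop}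
    [∀ π', Decidable (p π')] [∀ π', Decidable (q π')]
    (h : ∀ π', μ π' ≠ 0 → (p π' ↔ q π')) :
    (∑ π' : RankOrd α, if p π' then μ π' else 0)
      = (∑ π' : RankOrd α, if q π' then μ π' else 0) := by
  apply Finset.sum_congr rfl
  intro π' _
  by_cases hμ : μ π' = 0
  · split_ifs <;> simp [hμ]
  · by_cases hp : p π'
    · rw [if_pos hp, if_pos ((h π' hμ).1 hp)]
    · rw [if_neg hp, if_neg (fun hq => hp ((h π' hμ).2 hq))]

lemma main_induction {ν ν' : RankOrd α → ℝ} {P : Finset α → α → ℝ}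
    (hcp : NoCP ν) (hd : IsDist ν) (hd' : IsDist ν')
    (hmarg : ∀ (x : α) (B : Finset α),
      (∑ π : RankOrd α, if upper π x = B then ν π else 0)
        = (∑ π : RankOrd α, if upper π x = B then ν' π else 0)) :
    ∀ k, k ≤ Fintype.card α → ∀ π : RankOrd α,
      (∑ π' : RankOrd α, if topAgree π π' k then ν' π' else 0)
        = (∑ π' : RankOrd α, if topAgree π π' k then ν π' else 0) := by
  intro k
  induction k with
  | zero =>
    intro _ π
    have hall : ∀ (μ : RankOrd α → ℝ), (∑ π' : RankOrd α, if topAgree π π' 0 then μ π' else 0)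
        = ∑ π' : RankOrd α, μ π' := by
      intro μ
      apply Finset.sum_congr rfl
      intro π' _
      rw [if_pos (topAgree_zero π π')]
    rw [hall, hall, hd.2, hd'.2]
  | succ k IH =>
    intro hk1 π
    have hkN : k < Fintype.card α := by omega
    have ht : Fintype.card α - k - 1 < Fintype.card α := by omega
    set t := Fintype.card α - k - 1 with htdef
    set x := π.symm ⟨t, ht⟩ with hxdef
    have hx : (π x : ℕ) = t := by rw [hxdef]; simp
    set S := topset π k with hSdef
    have hxS : x ∉ S := by
      rw [hSdef, mem_topset]
      omega
    have hsucc : ∀ π' : RankOrd α, topAgree π π' (k+1) ↔ topAgree π π' k ∧ (π' x : ℕ) = t :=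
      fun π' => topAgree_succ_iff hkN hx
    -- edge-flow equality
    have hflow : ∀ w ∉ S,
        (∑ π' : RankOrd α, if topset π' k = S ∧ (π' w : ℕ) = t then ν π' else 0)
          = (∑ π' : RankOrd α, if topset π' k = S ∧ (π' w : ℕ) = t then ν' π' else 0) := by
      intro w hwS
      have hchar : ∀ π' : RankOrd α,
          (topset π' k = S ∧ (π' w : ℕ) = t) ↔ upper π' w = S ∪ {w} := by
        intro π'
        constructor
        · rintro ⟨h1, h2⟩
          rw [upper_eq_topset (l := k+1) (by omega : (π' w : ℕ) = Fintype.card α - (k+1)),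
            topset_succ_eq hkN (by omega : (π' w : ℕ) = Fintype.card α - k - 1), h1]
        · intro h
          have hcard : (upper π' w).card = (S ∪ {w}).card := by rw [h]
          rw [card_upper] at hcard
          have hScard : S.card = Fintype.card α - (Fintype.card α - k) := card_topset π k
          have hcardU : (S ∪ {w}).card = S.card + 1 := by
            rw [union_singleton_eq, Finset.card_insert_of_notMem hwS]
          have hwlt := (π' w).isLt
          have h2 : (π' w : ℕ) = t := by omega
          refine ⟨?_, h2⟩
          have hpred := topset_pred (l := k+1) (by omega) (by omega)
            (a := w) (σ := π') (by omega : (π' w : ℕ) = Fintype.card α - (k+1))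
          have hup : upper π' w = topset π' (k+1) :=
            upper_eq_topset (by omega : (π' w : ℕ) = Fintype.card α - (k+1))
          simp only [Nat.add_sub_cancel] at hpred
          rw [hpred, ← hup, h, union_singleton_eq, Finset.erase_insert hwS]
      rw [sum_if_congr (fun π' _ => hchar π'), sum_if_congr (fun π' _ => hchar π')]
      exact hmarg w (S ∪ {w})
    by_cases hS0 : (∑ π' : RankOrd α, if topAgree π π' k then ν π' else 0) = 0
    · -- zero-mass case
      have hzero : ∀ (μ : RankOrd α → ℝ), (∀ π'', 0 ≤ μ π'') →
          (∑ π' : RankOrd α, if topAgree π π' k then μ π' else 0) = 0 →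
          (∑ π' : RankOrd α, if topAgree π π' (k+1) then μ π' else 0) = 0 := by
        intro μ hnn hz
        have hterm := (Finset.sum_eq_zero_iff_of_nonneg (fun π' _ => by
          by_cases h : topAgree π π' k
          · rw [if_pos h]; exact hnn π'
          · rw [if_neg h])).1 hz
        apply Finset.sum_eq_zero
        intro π' _
        by_cases h : topAgree π π' (k+1)
        · rw [if_pos h]
          have h1 := hterm π' (Finset.mem_univ π')
          rw [if_pos (topAgree_mono (by omega) h)] at h1
          exact h1
        · rw [if_neg h]
      rw [hzero ν hd.1 hS0, hzero ν' hd'.1 (by rw [IH (by omega) π]; exact hS0)]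
    · -- there is a support order with the same top-k prefix as π
      obtain ⟨ρ, _, hρ⟩ := Finset.exists_ne_zero_of_sum_ne_zero hS0
      have hρag : topAgree π ρ k := by
        by_contra h
        rw [if_neg h] at hρ
        exact hρ rfl
      rw [if_pos hρag] at hρ
      have hρpos : 0 < ν ρ := lt_of_le_of_ne (hd.1 ρ) (Ne.symm hρ)
      have hρS : topset ρ k = S := (topset_eq_of_topAgree hρag).symm
      by_cases hI : ∀ σ, 0 < ν σ → topset σ k = S → (σ x : ℕ) = t
      · -- Case I: all ν-support orders through S pick x next
        have hI' : ∀ τ, 0 < ν' τ → topset τ k = S → (τ x : ℕ) = t := by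
          intro τ hτ hSτ
          set w := τ.symm ⟨t, ht⟩ with hwdef
          have hw : (τ w : ℕ) = t := by rw [hwdef]; simp
          have hwS : w ∉ S := by
            intro hmem
            rw [← hSτ, mem_topset] at hmem
            omega
          have hpos : (0:ℝ) < ∑ π' : RankOrd α,
              if topset π' k = S ∧ (π' w : ℕ) = t then ν π' else 0 := by
            rw [hflow w hwS]
            have h0 : ∀ π' : RankOrd α, π' ∈ Finset.univ →
                (0:ℝ) ≤ if topset π' k = S ∧ (π' w : ℕ) = t then ν' π' else 0 := by
              intro π' _
              by_cases h : topset π' k = S ∧ (π' w : ℕ) = t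
              · rw [if_pos h]; exact hd'.1 π'
              · rw [if_neg h]
            have hle := Finset.single_le_sum h0 (Finset.mem_univ τ)
            rw [if_pos ⟨hSτ, hw⟩] at hle
            linarith
          obtain ⟨σ, _, hσne⟩ := Finset.exists_ne_zero_of_sum_ne_zero (ne_of_gt hpos)
          have hσc : topset σ k = S ∧ (σ w : ℕ) = t := by
            by_contra h
            rw [if_neg h] at hσne
            exact hσne rfl
          rw [if_pos hσc] at hσne
          have hσpos : 0 < ν σ := lt_of_le_of_ne (hd.1 σ) (Ne.symm hσne)
          have hσx := hI σ hσpos hσc.1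
          have : x = w := σ.injective (Fin.ext (by rw [hσx, hσc.2]))
          rw [this, hw]
        have e1 : (∑ π' : RankOrd α, if topAgree π π' (k+1) then ν π' else 0)
            = (∑ π' : RankOrd α, if topAgree π π' k then ν π' else 0) := by
          apply sum_if_congr
          intro π' hne
          have hpos : 0 < ν π' := lt_of_le_of_ne (hd.1 π') (Ne.symm hne)
          rw [hsucc π']
          constructor
          · exact fun h => h.1
          · intro h
            exact ⟨h, hI π' hpos (topset_eq_of_topAgree h).symm⟩
        have e2 : (∑ π' : RankOrd α, if topAgree π π' (k+1) then ν' π' else 0)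
            = (∑ π' : RankOrd α, if topAgree π π' k then ν' π' else 0) := by
          apply sum_if_congr
          intro π' hne
          have hpos : 0 < ν' π' := lt_of_le_of_ne (hd'.1 π') (Ne.symm hne)
          rw [hsucc π']
          constructor
          · exact fun h => h.1
          · intro h
            exact ⟨h, hI' π' hpos (topset_eq_of_topAgree h).symm⟩
        rw [e1, e2, IH (by omega) π]
      · push_neg at hI
        obtain ⟨τ₀, hτ₀pos, hτ₀S, hτ₀x⟩ := hI
        by_cases hF : ∀ σ₁ σ₂, 0 < ν σ₁ → 0 < ν σ₂ → topset σ₁ k = S → topset σ₂ k = S →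
            ∀ z ∉ S, (σ₁ z : ℕ) = (σ₂ z : ℕ)
        · -- Case II.a : forced below S, but the forced choice is not x
          have hν0 : (∑ π' : RankOrd α, if topAgree π π' (k+1) then ν π' else 0) = 0 := by
            apply Finset.sum_eq_zero
            intro π' _
            by_cases h : topAgree π π' (k+1)
            · rw [if_pos h]
              by_contra hne
              have hpos : 0 < ν π' := lt_of_le_of_ne (hd.1 π') (Ne.symm hne)
              obtain ⟨h1, h2⟩ := (hsucc π').1 h
              have := hF π' τ₀ hpos hτ₀pos (topset_eq_of_topAgree h1).symm hτ₀S x hxS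
              omega
            · rw [if_neg h]
          have hex : (∑ π' : RankOrd α, if topset π' k = S ∧ (π' x : ℕ) = t then ν π' else 0)
              = 0 := by
            apply Finset.sum_eq_zero
            intro π' _
            by_cases h : topset π' k = S ∧ (π' x : ℕ) = t
            · rw [if_pos h]
              by_contra hne
              have hpos : 0 < ν π' := lt_of_le_of_ne (hd.1 π') (Ne.symm hne)
              have := hF π' τ₀ hpos hτ₀pos h.1 hτ₀S x hxS
              omega
            · rw [if_neg h]
          have hν'0 : (∑ π' : RankOrd α, if topAgree π π' (k+1) then ν' π' else 0) = 0 := by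
            have hex' : (∑ π' : RankOrd α,
                if topset π' k = S ∧ (π' x : ℕ) = t then ν' π' else 0) = 0 := by
              rw [← hflow x hxS]; exact hex
            have hterm := (Finset.sum_eq_zero_iff_of_nonneg (fun π' _ => by
              by_cases h : topset π' k = S ∧ (π' x : ℕ) = t
              · rw [if_pos h]; exact hd'.1 π'
              · rw [if_neg h])).1 hex'
            apply Finset.sum_eq_zero
            intro π' _
            by_cases h : topAgree π π' (k+1)
            · rw [if_pos h]
              obtain ⟨h1, h2⟩ := (hsucc π').1 h
              have h3 := hterm π' (Finset.mem_univ π')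
              rw [if_pos ⟨(topset_eq_of_topAgree h1).symm, h2⟩] at h3
              exact h3
            · rw [if_neg h]
          rw [hν0, hν'0]
        · -- Case II.b : not forced, so unique prefix through S
          push_neg at hF
          obtain ⟨ρ₁, ρ₂, hρ₁pos, hρ₂pos, hS₁, hS₂, z₀, hz₀S, hz₀⟩ := hF
          obtain ⟨hE1, hE2⟩ := engine hcp hd hd' hmarg (le_of_lt hkN) hρ₁pos hρ₂pos
            hS₁ hS₂ hz₀S hz₀
          have hπρ₁ : topAgree π ρ₁ k :=
            topAgree_trans hρag (topAgree_symm (hE1 ρ hρpos hρS))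
          have e1 : (∑ π' : RankOrd α, if topAgree π π' (k+1) then ν π' else 0)
              = (∑ π' : RankOrd α, if topset π' k = S ∧ (π' x : ℕ) = t then ν π' else 0) := by
            apply sum_if_congr
            intro π' hne
            have hpos : 0 < ν π' := lt_of_le_of_ne (hd.1 π') (Ne.symm hne)
            rw [hsucc π']
            constructor
            · rintro ⟨h1, h2⟩
              exact ⟨(topset_eq_of_topAgree h1).symm, h2⟩
            · rintro ⟨h1, h2⟩
              exact ⟨topAgree_trans hπρ₁ (hE1 π' hpos h1), h2⟩
          have e2 : (∑ π' : RankOrd α, if topAgree π π' (k+1) then ν' π' else 0)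
              = (∑ π' : RankOrd α, if topset π' k = S ∧ (π' x : ℕ) = t then ν' π' else 0) := by
            apply sum_if_congr
            intro π' hne
            have hpos : 0 < ν' π' := lt_of_le_of_ne (hd'.1 π') (Ne.symm hne)
            rw [hsucc π']
            constructor
            · rintro ⟨h1, h2⟩
              exact ⟨(topset_eq_of_topAgree h1).symm, h2⟩
            · rintro ⟨h1, h2⟩
              exact ⟨topAgree_trans hπρ₁ (hE2 π' hpos h1), h2⟩
          rw [e1, e2, hflow x hxS]

-- chunk 7: splice construction
def splice (π π' : RankOrd α) (m : ℕ) (hB : ∀ w, m ≤ (π w : ℕ) ↔ m ≤ (π' w : ℕ)) :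
    RankOrd α where
  toFun w := if m ≤ (π w : ℕ) then π' w else π w
  invFun j := if m ≤ (j : ℕ) then π'.symm j else π.symm j
  left_inv w := by
    dsimp only
    by_cases h : m ≤ (π w : ℕ)
    · rw [if_pos h, if_pos (by simpa using (hB w).1 h)]
      simp
    · rw [if_neg h, if_neg h]
      simp
  right_inv j := by
    dsimp only
    by_cases h : m ≤ (j : ℕ)
    · rw [if_pos h]
      have h2 : m ≤ (π' (π'.symm j) : ℕ) := by simpa using h
      rw [if_pos ((hB _).2 h2), Equiv.apply_symm_apply]
    · rw [if_neg h]
      have h2 : ¬ m ≤ (π (π.symm j) : ℕ) := by simpa using h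
      rw [if_neg h2, Equiv.apply_symm_apply]

omit [DecidableEq α] in
lemma splice_apply (π π' : RankOrd α) (m : ℕ) (hB : ∀ w, m ≤ (π w : ℕ) ↔ m ≤ (π' w : ℕ))
    (w : α) : (splice π π' m hB) w = if m ≤ (π w : ℕ) then π' w else π w := rfl

-- chunk 8: nonuniqueness from a contour pair
lemma not_unique_of_pair {ν : RankOrd α → ℝ} {P : Finset α → α → ℝ} (hν : Rationalizes ν P)
    (π π' : RankOrd α) (x y z : α) (hπ : 0 < ν π) (hπ' : 0 < ν π') (hxy : x ≠ y)
    (h1 : (π z : ℕ) < (π x : ℕ)) (h2 : (π z : ℕ) < (π y : ℕ))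
    (h3 : (π' z : ℕ) < (π' x : ℕ)) (h4 : (π' z : ℕ) < (π' y : ℕ))
    (h5 : upper π z ≠ upper π' z) (h6 : upper π x = upper π' y) :
    ∃ ν'' : RankOrd α → ℝ, Rationalizes ν'' P ∧ ν'' ≠ ν := by
  set m := (π x : ℕ) with hmdef
  have hm' : (π' y : ℕ) = m := by
    have hc1 := card_upper π x
    have hc2 := card_upper π' y
    rw [h6, hc2] at hc1
    have := (π x).isLt
    have := (π' y).isLt
    omega
  have hB : ∀ w, m ≤ (π w : ℕ) ↔ m ≤ (π' w : ℕ) := by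
    intro w
    have := Finset.ext_iff.1 h6 w
    rw [mem_upper, mem_upper, hm'] at this
    exact this
  have hB' : ∀ w, m ≤ (π' w : ℕ) ↔ m ≤ (π w : ℕ) := fun w => (hB w).symm
  set σ := splice π π' m hB with hσdef
  set σ' := splice π' π m hB' with hσ'def
  have hσap : ∀ w, σ w = if m ≤ (π w : ℕ) then π' w else π w := fun w => rfl
  have hσ'ap : ∀ w, σ' w = if m ≤ (π' w : ℕ) then π w else π' w := fun w => rfl
  have hππ' : π ≠ π' := fun he => h5 (by rw [he])
  -- σ ≠ π
  have hσπ : σ ≠ π := by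
    intro he
    have hyB : m ≤ (π y : ℕ) := by
      have hy : y ∈ upper π' y := mem_upper.2 le_rfl
      rw [← h6, mem_upper] at hy
      exact hy
    have hv : σ y = π' y := by rw [hσap y, if_pos hyB]
    rw [he] at hv
    have : (π y : ℕ) = m := by rw [hv, hm']
    exact hxy (π.injective (Fin.ext (by rw [this, hmdef]))).symm
  -- σ' ≠ π
  have hσ'π : σ' ≠ π := by
    intro he
    have hoff : ∀ w, ¬ m ≤ (π' w : ℕ) → π' w = π w := by
      intro w hw
      have hv : σ' w = π' w := by rw [hσ'ap w, if_neg hw]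
      rw [he] at hv
      exact hv.symm
    apply h5
    have hz : (π z : ℕ) < m := h1
    have hz' : (π' z : ℕ) < m := by omega
    have hzz : (π' z : ℕ) = (π z : ℕ) := by
      have := hoff z (by omega)
      rw [this]
    ext w
    rw [mem_upper, mem_upper]
    by_cases hw : m ≤ (π w : ℕ)
    · have hw' : m ≤ (π' w : ℕ) := (hB w).1 hw
      constructor <;> intro <;> omega
    · have hw' : ¬ m ≤ (π' w : ℕ) := fun hh => hw ((hB w).2 hh)
      have := hoff w hw'
      rw [this]
      omega
  -- the key indicator identity
  have hkey : ∀ (A : Finset α) (x' : α),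
      ((if ∀ y' ∈ A, y' ≠ x' → (σ y' : ℕ) < (σ x' : ℕ) then (1:ℝ) else 0)
        + (if ∀ y' ∈ A, y' ≠ x' → (σ' y' : ℕ) < (σ' x' : ℕ) then (1:ℝ) else 0))
      = ((if ∀ y' ∈ A, y' ≠ x' → (π y' : ℕ) < (π x' : ℕ) then (1:ℝ) else 0)
        + (if ∀ y' ∈ A, y' ≠ x' → (π' y' : ℕ) < (π' x' : ℕ) then (1:ℝ) else 0)) := by
    intro A x'
    by_cases hx' : m ≤ (π x' : ℕ)
    · have hx'2 : m ≤ (π' x' : ℕ) := (hB x').1 hx'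
      have hσx' : σ x' = π' x' := by rw [hσap x', if_pos hx']
      have hσ'x' : σ' x' = π x' := by rw [hσ'ap x', if_pos hx'2]
      have e1 : (∀ y' ∈ A, y' ≠ x' → (σ y' : ℕ) < (σ x' : ℕ))
          ↔ (∀ y' ∈ A, y' ≠ x' → (π' y' : ℕ) < (π' x' : ℕ)) := by
        constructor
        · intro h y' hy' hne
          by_cases hy : m ≤ (π y' : ℕ)
          · have hh := h y' hy' hne
            rw [hσx', hσap y', if_pos hy] at hh
            exact hh
          · have : ¬ m ≤ (π' y' : ℕ) := fun hh => hy ((hB y').2 hh)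
            omega
        · intro h y' hy' hne
          rw [hσx', hσap y']
          by_cases hy : m ≤ (π y' : ℕ)
          · rw [if_pos hy]
            exact h y' hy' hne
          · rw [if_neg hy]
            omega
      have e2 : (∀ y' ∈ A, y' ≠ x' → (σ' y' : ℕ) < (σ' x' : ℕ))
          ↔ (∀ y' ∈ A, y' ≠ x' → (π y' : ℕ) < (π x' : ℕ)) := by
        constructor
        · intro h y' hy' hne
          by_cases hy : m ≤ (π' y' : ℕ)
          · have hh := h y' hy' hne
            rw [hσ'x', hσ'ap y', if_pos hy] at hh
            exact hh
          · have : ¬ m ≤ (π y' : ℕ) := fun hh => hy ((hB y').1 hh)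
            omega
        · intro h y' hy' hne
          rw [hσ'x', hσ'ap y']
          by_cases hy : m ≤ (π' y' : ℕ)
          · rw [if_pos hy]
            exact h y' hy' hne
          · rw [if_neg hy]
            omega
      rw [if_congr e1 rfl rfl, if_congr e2 rfl rfl, add_comm]
    · by_cases hA : ∃ b ∈ A, m ≤ (π b : ℕ)
      · obtain ⟨b, hbA, hbB⟩ := hA
        have hbB' : m ≤ (π' b : ℕ) := (hB b).1 hbB
        have hx'2 : ¬ m ≤ (π' x' : ℕ) := fun hh => hx' ((hB x').2 hh)
        have hbx' : b ≠ x' := fun he => hx' (he ▸ hbB)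
        have f1 : ¬ (∀ y' ∈ A, y' ≠ x' → (π y' : ℕ) < (π x' : ℕ)) := by
          intro h
          have := h b hbA hbx'
          omega
        have f2 : ¬ (∀ y' ∈ A, y' ≠ x' → (π' y' : ℕ) < (π' x' : ℕ)) := by
          intro h
          have := h b hbA hbx'
          omega
        have f3 : ¬ (∀ y' ∈ A, y' ≠ x' → (σ y' : ℕ) < (σ x' : ℕ)) := by
          intro h
          have hh := h b hbA hbx'
          rw [hσap b, if_pos hbB, hσap x', if_neg hx'] at hh
          omega
        have f4 : ¬ (∀ y' ∈ A, y' ≠ x' → (σ' y' : ℕ) < (σ' x' : ℕ)) := by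
          intro h
          have hh := h b hbA hbx'
          rw [hσ'ap b, if_pos hbB', hσ'ap x', if_neg hx'2] at hh
          omega
        rw [if_neg f1, if_neg f2, if_neg f3, if_neg f4]
      · push_neg at hA
        have hx'2 : ¬ m ≤ (π' x' : ℕ) := fun hh => hx' ((hB x').2 hh)
        have e1 : (∀ y' ∈ A, y' ≠ x' → (σ y' : ℕ) < (σ x' : ℕ))
            ↔ (∀ y' ∈ A, y' ≠ x' → (π y' : ℕ) < (π x' : ℕ)) := by
          have hval : ∀ y' ∈ A, σ y' = π y' := by
            intro y' hy'
            rw [hσap y', if_neg (by have := hA y' hy'; omega)]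
          constructor
          · intro h y' hy' hne
            have hh := h y' hy' hne
            rw [hval y' hy', hσap x', if_neg hx'] at hh
            exact hh
          · intro h y' hy' hne
            rw [hval y' hy', hσap x', if_neg hx']
            exact h y' hy' hne
        have e2 : (∀ y' ∈ A, y' ≠ x' → (σ' y' : ℕ) < (σ' x' : ℕ))
            ↔ (∀ y' ∈ A, y' ≠ x' → (π' y' : ℕ) < (π' x' : ℕ)) := by
          have hval : ∀ y' ∈ A, σ' y' = π' y' := by
            intro y' hy'
            have : ¬ m ≤ (π' y' : ℕ) := fun hh => (by have := hA y' hy'; omega : ¬ m ≤ (π y' : ℕ)) ((hB y').2 hh)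
            rw [hσ'ap y', if_neg this]
          constructor
          · intro h y' hy' hne
            have hh := h y' hy' hne
            rw [hval y' hy', hσ'ap x', if_neg hx'2] at hh
            exact hh
          · intro h y' hy' hne
            rw [hval y' hy', hσ'ap x', if_neg hx'2]
            exact h y' hy' hne
        rw [if_congr e1 rfl rfl, if_congr e2 rfl rfl]
  -- the perturbed distribution
  set ε := min (ν π) (ν π') with hεdef
  have hε : 0 < ε := lt_min hπ hπ'
  set ν'' : RankOrd α → ℝ := fun ρ => ν ρ + ε *
    ((if ρ = σ then (1:ℝ) else 0) + (if ρ = σ' then (1:ℝ) else 0)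
      - (if ρ = π then (1:ℝ) else 0) - (if ρ = π' then (1:ℝ) else 0)) with hν''def
  have hind : ∀ a : RankOrd α, (∑ ρ : RankOrd α, (if ρ = a then (1:ℝ) else 0)) = 1 := by
    intro a
    rw [Finset.sum_ite_eq' Finset.univ a (fun _ => (1:ℝ)), if_pos (Finset.mem_univ a)]
  refine ⟨ν'', ⟨⟨?_, ?_⟩, ?_⟩, ?_⟩
  · -- nonneg
    intro ρ
    have ha : (0:ℝ) ≤ (if ρ = σ then (1:ℝ) else 0) := by split_ifs <;> norm_num
    have hb : (0:ℝ) ≤ (if ρ = σ' then (1:ℝ) else 0) := by split_ifs <;> norm_num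
    have hεν : ε * ((if ρ = π then (1:ℝ) else 0) + (if ρ = π' then (1:ℝ) else 0)) ≤ ν ρ := by
      by_cases hc1 : ρ = π
      · rw [if_pos hc1, if_neg (fun hh => hππ' (hc1.symm.trans hh))]
        rw [hc1]
        have : ε ≤ ν π := min_le_left _ _
        linarith
      · rw [if_neg hc1]
        by_cases hc2 : ρ = π'
        · rw [if_pos hc2, hc2]
          have : ε ≤ ν π' := min_le_right _ _
          linarith
        · rw [if_neg hc2]
          have := hν.1.1 ρ
          linarith
    rw [hν''def]
    simp only
    nlinarith [mul_nonneg hε.le (add_nonneg ha hb)]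
  · -- sums to one
    rw [hν''def]
    simp only
    rw [Finset.sum_add_distrib, ← Finset.mul_sum]
    rw [Finset.sum_sub_distrib, Finset.sum_sub_distrib, Finset.sum_add_distrib]
    rw [hind σ, hind σ', hind π, hind π', hν.1.2]
    ring
  · -- rationalizes P
    intro A hAne x' hx'
    rw [hν.2 A hAne x' hx']
    unfold choiceProb
    have hterm : ∀ ρ : RankOrd α,
        (if ∀ y ∈ A, y ≠ x' → (ρ y : ℕ) < (ρ x' : ℕ) then ν'' ρ else 0)
          = (if ∀ y ∈ A, y ≠ x' → (ρ y : ℕ) < (ρ x' : ℕ) then ν ρ else 0)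
            + ε * ((if ρ = σ then (if ∀ y ∈ A, y ≠ x' → (σ y : ℕ) < (σ x' : ℕ) then (1:ℝ) else 0) else 0)
              + (if ρ = σ' then (if ∀ y ∈ A, y ≠ x' → (σ' y : ℕ) < (σ' x' : ℕ) then (1:ℝ) else 0) else 0)
              - (if ρ = π then (if ∀ y ∈ A, y ≠ x' → (π y : ℕ) < (π x' : ℕ) then (1:ℝ) else 0) else 0)
              - (if ρ = π' then (if ∀ y ∈ A, y ≠ x' → (π' y : ℕ) < (π' x' : ℕ) then (1:ℝ) else 0) else 0)) := by
      intro ρ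
      have hsw : ∀ τ : RankOrd α, (if ρ = τ then (if ∀ y ∈ A, y ≠ x' → (τ y : ℕ) < (τ x' : ℕ) then (1:ℝ) else 0) else 0)
          = (if ∀ y ∈ A, y ≠ x' → (ρ y : ℕ) < (ρ x' : ℕ) then (if ρ = τ then (1:ℝ) else 0) else 0) := by
        intro τ
        by_cases h : ρ = τ
        · subst h
          rw [if_pos rfl, if_pos rfl]
        · rw [if_neg h]
          split_ifs <;> rfl
      rw [hsw σ, hsw σ', hsw π, hsw π']
      by_cases h : ∀ y ∈ A, y ≠ x' → (ρ y : ℕ) < (ρ x' : ℕ)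
      · simp only [if_pos h, hν''def]
      · simp only [if_neg h]
        ring
    rw [Finset.sum_congr rfl (fun ρ _ => hterm ρ)]
    rw [Finset.sum_add_distrib, ← Finset.mul_sum]
    rw [Finset.sum_sub_distrib, Finset.sum_sub_distrib, Finset.sum_add_distrib]
    have hindc : ∀ (a : RankOrd α) (r : ℝ), (∑ ρ : RankOrd α, (if ρ = a then r else 0)) = r := by
      intro a r
      rw [Finset.sum_ite_eq' Finset.univ a (fun _ => r), if_pos (Finset.mem_univ a)]
    rw [hindc σ _, hindc σ' _, hindc π _, hindc π' _]
    nlinarith [hkey A x']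
  · -- differs from ν
    intro he
    have hcon := congrFun he π
    rw [hν''def] at hcon
    simp only [if_neg (Ne.symm hσπ : π ≠ σ), if_neg (Ne.symm hσ'π : π ≠ σ'),
      if_pos rfl, if_neg hππ'] at hcon
    have : ν π + ε * (0 + 0 - 1 - 0) = ν π := hcon
    nlinarith

-- chunk 9: final assembly
lemma eq_of_nocp {ν ν' : RankOrd α → ℝ} {P : Finset α → α → ℝ}
    (hν : Rationalizes ν P) (hν' : Rationalizes ν' P) (hcp : NoCP ν) : ν' = ν := by
  have hmarg : ∀ (x : α) (B : Finset α),
      (∑ π : RankOrd α, if upper π x = B then ν π else 0)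
        = (∑ π : RankOrd α, if upper π x = B then ν' π else 0) :=
    fun x B => marg_eq hν hν' x B
  have hmain := main_induction (P := P) hcp hν.1 hν'.1 hmarg (Fintype.card α) le_rfl
  funext π
  have hsingle : ∀ (μ : RankOrd α → ℝ),
      (∑ π' : RankOrd α, if topAgree π π' (Fintype.card α) then μ π' else 0) = μ π := by
    intro μ
    rw [Finset.sum_eq_single π]
    · rw [if_pos (show topAgree π π (Fintype.card α) from fun w _ => rfl)]
    · intro π' _ hne
      rw [if_neg (fun h => hne (eq_of_topAgree_card h).symm)]
    · intro h
      exact absurd (Finset.mem_univ π) h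
  have h := hmain π
  rw [hsingle ν, hsingle ν'] at h
  exact h


/-- Theorem 2: a rationalizing distribution `ν` is the unique rationalization iff there
is no pair of orders in its support satisfying the contour-set conditions. -/
theorem unique_iff_no_contour_pair {α : Type*} [Fintype α] [DecidableEq α]
    (P : Finset α → α → ℝ) (ν : RankOrd α → ℝ) (hν : Rationalizes ν P) :
    (∀ ν' : RankOrd α → ℝ, Rationalizes ν' P → ν' = ν) ↔
      ¬ ∃ (π π' : RankOrd α) (x y z : α),
        0 < ν π ∧ 0 < ν π' ∧ x ≠ y ∧
        (π z : ℕ) < (π x : ℕ) ∧ (π z : ℕ) < (π y : ℕ) ∧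
        (π' z : ℕ) < (π' x : ℕ) ∧ (π' z : ℕ) < (π' y : ℕ) ∧
        upper π z ≠ upper π' z ∧ upper π x = upper π' y := by

  constructor
  · intro huniq hpair
    obtain ⟨π, π', x, y, z, hπ, hπ', hxy, h1, h2, h3, h4, h5, h6⟩ := hpair
    obtain ⟨ν'', hR, hne⟩ := not_unique_of_pair hν π π' x y z hπ hπ' hxy h1 h2 h3 h4 h5 h6
    exact hne (huniq ν'' hR)
  · intro hcp ν' hν'
    exact eq_of_nocp hν hν' hcp
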